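/- Hedge regret bound: let η > 0, let T ≥ 1, and let θ_1,…,θ_T be an arbitrary sequence in Θ (not necessarily best responses). Then for every index i ∈ {1,…,I}, (1/T)·Σ_{t=1}^T Σ_{j=1}^I p_{j,t}·R(j,θ_t) ≤ (1/T)·Σ_{t=1}^T R(i,θ_t) + η·M²/2 + ln(I)/(T·η). -/

import Mathlib

open Finset

lemma exp_neg_le_quad (x : ℝ) (hx : 0 ≤ x) :
    Real.exp (-x) ≤ 1 - x + x ^ 2 / 2 := by
  have h : 1 + x + x ^ 2 / 2 ≤ Real.exp x := Real.quadratic_le_exp_of_nonneg hx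
  have hpos : (0:ℝ) < 1 + x + x ^ 2 / 2 := by positivity
  have h2 : Real.exp (-x) ≤ 1 / (1 + x + x ^ 2 / 2) := by
    rw [Real.exp_neg, ← one_div]
    exact one_div_le_one_div_of_le hpos h
  refine h2.trans ?_
  rw [div_le_iff₀ hpos]
  nlinarith [sq_nonneg x, sq_nonneg (x^2)]

/-- Hedge regret bound: for any step size `η > 0`, horizon `T ≥ 1`, and any
sequence `θ_1,…,θ_T`, the average payoff of the Hedge iterates is bounded by
the average payoff of any fixed decision rule `i` plus `η M²/2 + ln I/(T η)`. -/
theorem hedge_regret_bound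
    (I : ℕ) (hI : 0 < I) (Θ : Type*) [Nonempty Θ] (M : ℝ) (hM : 0 < M)
    (R : Fin I → Θ → ℝ) (hR : ∀ i θ, 0 ≤ R i θ ∧ R i θ ≤ M)
    (η : ℝ) (hη : 0 < η) (T : ℕ) (hT : 1 ≤ T)
    (θ : ℕ → Θ) (w : ℕ → Fin I → ℝ) (p : ℕ → Fin I → ℝ)
    (hw0 : ∀ i, w 0 i = 1)
    (hw : ∀ t i, w (t + 1) i = w t i * Real.exp (-η * R i (θ (t + 1))))
    (hp : ∀ t i, p (t + 1) i = w t i / ∑ j, w t j)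
    (i : Fin I) :
    (1 / (T : ℝ)) * ∑ t ∈ Finset.Icc 1 T, ∑ j, p t j * R j (θ t)
      ≤ (1 / (T : ℝ)) * ∑ t ∈ Finset.Icc 1 T, R i (θ t)
        + η * M ^ 2 / 2 + Real.log I / ((T : ℝ) * η) := by
  have wpos : ∀ t j, 0 < w t j := by
    intro t
    induction t with
    | zero => intro j; rw [hw0]; norm_num
    | succ n ih => intro j; rw [hw]; exact mul_pos (ih j) (Real.exp_pos _)
  have Wpos : ∀ t, 0 < ∑ j, w t j := fun t =>
    Finset.sum_pos (fun j _ => wpos t j) ⟨⟨0, hI⟩, mem_univ _⟩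
  -- explicit formula for w t i
  have wform : ∀ t, w t i = Real.exp (-η * ∑ s ∈ Finset.range t, R i (θ (s + 1))) := by
    intro t
    induction t with
    | zero => simp [hw0]
    | succ n ih =>
      rw [hw, ih, ← Real.exp_add, Finset.sum_range_succ]
      congr 1
      ring
  -- one-step bound on the total weight
  have step : ∀ t, (∑ j, w (t + 1) j) ≤
      (∑ j, w t j) *
        Real.exp (-(η * ∑ j, p (t + 1) j * R j (θ (t + 1))) + η ^ 2 * M ^ 2 / 2) := by
    intro t
    set W := ∑ j, w t j with hWdef
    have hWpos : 0 < W := Wpos t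
    have hpR : W * (∑ j, p (t + 1) j * R j (θ (t + 1)))
        = ∑ j, w t j * R j (θ (t + 1)) := by
      rw [Finset.mul_sum]
      refine Finset.sum_congr rfl fun j _ => ?_
      rw [hp]
      field_simp
      rw [← hWdef, mul_assoc, mul_div_cancel_left₀ _ hWpos.ne']
    have h1 : (∑ j, w (t + 1) j) ≤
        ∑ j, w t j * (1 - η * R j (θ (t + 1)) + η ^ 2 * M ^ 2 / 2) := by
      refine Finset.sum_le_sum fun j _ => ?_
      rw [hw]
      have hRj := hR j (θ (t + 1))
      have hx : 0 ≤ η * R j (θ (t + 1)) := mul_nonneg hη.le hRj.1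
      have he : Real.exp (-(η * R j (θ (t + 1)))) ≤
          1 - η * R j (θ (t + 1)) + (η * R j (θ (t + 1))) ^ 2 / 2 :=
        exp_neg_le_quad _ hx
      have hsq : (η * R j (θ (t + 1))) ^ 2 ≤ η ^ 2 * M ^ 2 := by
        rw [mul_pow]
        exact mul_le_mul_of_nonneg_left
          (pow_le_pow_left₀ hRj.1 hRj.2 2) (by positivity)
      have : Real.exp (-η * R j (θ (t + 1))) ≤
          1 - η * R j (θ (t + 1)) + η ^ 2 * M ^ 2 / 2 := by
        rw [neg_mul]
        linarith
      exact mul_le_mul_of_nonneg_left this (wpos t j).le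
    have h2 : ∑ j, w t j * (1 - η * R j (θ (t + 1)) + η ^ 2 * M ^ 2 / 2)
        = W * (1 + (-(η * ∑ j, p (t + 1) j * R j (θ (t + 1))) + η ^ 2 * M ^ 2 / 2)) := by
      have hterm : ∀ j : Fin I, w t j * (1 - η * R j (θ (t + 1)) + η ^ 2 * M ^ 2 / 2)
          = w t j - η * (w t j * R j (θ (t + 1))) + η ^ 2 * M ^ 2 / 2 * w t j := by
        intro j; ring
      rw [Finset.sum_congr rfl fun j _ => hterm j, Finset.sum_add_distrib,
        Finset.sum_sub_distrib, ← Finset.mul_sum, ← Finset.mul_sum, ← hpR]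
      ring
    have h3 : 1 + (-(η * ∑ j, p (t + 1) j * R j (θ (t + 1))) + η ^ 2 * M ^ 2 / 2)
        ≤ Real.exp (-(η * ∑ j, p (t + 1) j * R j (θ (t + 1))) + η ^ 2 * M ^ 2 / 2) := by
      have := Real.add_one_le_exp
        (-(η * ∑ j, p (t + 1) j * R j (θ (t + 1))) + η ^ 2 * M ^ 2 / 2)
      linarith
    calc (∑ j, w (t + 1) j) ≤ _ := h1
      _ = _ := h2
      _ ≤ _ := mul_le_mul_of_nonneg_left h3 hWpos.le
  -- telescoped bound
  have tele : ∀ t, (∑ j, w t j) ≤ (I : ℝ) *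
      Real.exp (-(η * ∑ s ∈ Finset.range t, ∑ j, p (s + 1) j * R j (θ (s + 1)))
        + (t : ℝ) * (η ^ 2 * M ^ 2 / 2)) := by
    intro t
    induction t with
    | zero => simp [hw0]
    | succ n ih =>
      calc (∑ j, w (n + 1) j)
          ≤ (∑ j, w n j) *
            Real.exp (-(η * ∑ j, p (n + 1) j * R j (θ (n + 1))) + η ^ 2 * M ^ 2 / 2) :=
            step n
        _ ≤ ((I : ℝ) *
            Real.exp (-(η * ∑ s ∈ Finset.range n, ∑ j, p (s + 1) j * R j (θ (s + 1)))
              + (n : ℝ) * (η ^ 2 * M ^ 2 / 2))) *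
            Real.exp (-(η * ∑ j, p (n + 1) j * R j (θ (n + 1))) + η ^ 2 * M ^ 2 / 2) :=
            mul_le_mul_of_nonneg_right ih (Real.exp_pos _).le
        _ = (I : ℝ) *
            Real.exp (-(η * ∑ s ∈ Finset.range (n + 1), ∑ j, p (s + 1) j * R j (θ (s + 1)))
              + ((n : ℝ) + 1) * (η ^ 2 * M ^ 2 / 2)) := by
            rw [mul_assoc, ← Real.exp_add, Finset.sum_range_succ]
            congr 2
            ring
        _ = _ := by push_cast; ring_nf
  -- compare w T i with the total weight
  set A : ℝ := ∑ s ∈ Finset.range T, ∑ j, p (s + 1) j * R j (θ (s + 1)) with hA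
  set S : ℝ := ∑ s ∈ Finset.range T, R i (θ (s + 1)) with hS
  have hIpos : (0 : ℝ) < I := by exact_mod_cast hI
  have key : Real.exp (-η * S) ≤ (I : ℝ) *
      Real.exp (-(η * A) + (T : ℝ) * (η ^ 2 * M ^ 2 / 2)) := by
    rw [hS, hA, ← wform T]
    exact le_trans (Finset.single_le_sum (fun j _ => (wpos T j).le) (mem_univ i)) (tele T)
  have expfold : ∀ y : ℝ, Real.exp (Real.log I + y) = (I : ℝ) * Real.exp y := fun y => by
    rw [Real.exp_add, Real.exp_log hIpos]
  have key' : -η * S ≤ Real.log I + (-(η * A) + (T : ℝ) * (η ^ 2 * M ^ 2 / 2)) := by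
    rw [← expfold] at key
    exact Real.exp_le_exp.mp key
  have h2 : η * A ≤ η * S + Real.log I + (T : ℝ) * (η ^ 2 * M ^ 2 / 2) := by
    nlinarith [key']
  have hTpos : (0 : ℝ) < T := by exact_mod_cast hT
  -- rewrite the Icc sums as range sums
  have hconv : ∀ f : ℕ → ℝ, ∑ t ∈ Finset.Icc 1 T, f t = ∑ s ∈ Finset.range T, f (s + 1) := by
    intro f
    rw [← Finset.Ico_add_one_right_eq_Icc, Finset.sum_Ico_eq_sum_range]
    simp [Nat.add_comm]
  rw [hconv, hconv, ← hA, ← hS]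
  calc (1 / (T : ℝ)) * A = (1 / ((T : ℝ) * η)) * (η * A) := by
        field_simp
    _ ≤ (1 / ((T : ℝ) * η)) * (η * S + Real.log I + (T : ℝ) * (η ^ 2 * M ^ 2 / 2)) := by
        apply mul_le_mul_of_nonneg_left h2
        positivity
    _ = (1 / (T : ℝ)) * S + η * M ^ 2 / 2 + Real.log I / ((T : ℝ) * η) := by
        field_simp
        ring
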